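/- Let μ be a Λ-nice measure and K an s-dimensional CZ kernel; let K^δ = K − K_δ denote the localized kernel (supported in the closed ball of radius δ). Let f be a compactly supported Lipschitz function and φ a bounded Lipschitz function on ℝ^d, with supports E = supp(f) and F = supp(φ). Then |∬ K^δ(x−y) H_{f,φ}(x,y) dμ(x) dμ(y)| ≤ C_2 δ (‖f‖_{Lip}‖φ‖_∞ + ‖f‖_∞‖φ‖_{Lip}) · μ(E ∩ F_δ), where H_{f,φ}(x,y) = (1/2)[f(y)φ(x) − f(x)φ(y)], F_δ is the closed δ-neighbourhood of F, and C_2 depends only on d, s, Λ. -/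

import Mathlib

open Classical MeasureTheory Metric

lemma stmt9_key {X : Type*} [MeasurableSpace X] [PseudoMetricSpace X] [OpensMeasurableSpace X]
    (s Λ : ℝ) (hs : 0 < s) (hΛ : 0 < Λ) (μ : Measure X)
    (hμ : ∀ (x : X) (r : ℝ), 0 < r → μ (ball x r) ≤ ENNReal.ofReal (Λ * r ^ s))
    (x : X) (δ : ℝ) (hδ : 0 < δ) :
    ∫⁻ y, ENNReal.ofReal (if dist x y ≤ δ then dist x y * ((dist x y) ^ s)⁻¹ else 0) ∂μ
      ≤ ENNReal.ofReal (2 * 4 ^ s * Λ * δ) := by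
  set F : X → ENNReal := fun y =>
    ENNReal.ofReal (if dist x y ≤ δ then dist x y * ((dist x y) ^ s)⁻¹ else 0) with hF
  set Ann : ℕ → Set X := fun k =>
    closedBall x (δ * 2⁻¹ ^ k) \ closedBall x (δ * 2⁻¹ ^ (k + 1)) with hAnn
  have hpow : ∀ k : ℕ, (0:ℝ) < δ * 2⁻¹ ^ k := fun k => by positivity
  have hAnnMeas : ∀ k, MeasurableSet (Ann k) :=
    fun k => (measurableSet_closedBall).diff measurableSet_closedBall
  have hmem : ∀ k (y : X), y ∈ Ann k ↔
      dist x y ≤ δ * 2⁻¹ ^ k ∧ δ * 2⁻¹ ^ (k + 1) < dist x y := by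
    intro k y
    simp [hAnn, Set.mem_diff, mem_closedBall, dist_comm, not_le]
  -- disjointness
  have haux : ∀ i j : ℕ, i < j → Disjoint (Ann i) (Ann j) := by
    intro i j hij
    rw [Set.disjoint_left]
    intro y hyi hyj
    rw [hmem] at hyi hyj
    have h1 : δ * 2⁻¹ ^ j ≤ δ * 2⁻¹ ^ (i + 1) := by
      apply mul_le_mul_of_nonneg_left _ hδ.le
      exact pow_le_pow_of_le_one (by norm_num) (by norm_num) hij
    exact absurd (hyj.1.trans h1) (not_le.mpr hyi.2)
  have hdisj : Pairwise (Function.onFun Disjoint Ann) := by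
    intro i j hij
    rcases hij.lt_or_gt with h | h
    · exact haux i j h
    · exact (haux j i h).symm
  -- covering
  have hcover : ∀ y : X, 0 < dist x y → dist x y ≤ δ → ∃ k, y ∈ Ann k := by
    intro y h0 h1
    have ht0 : 0 < dist x y / δ := div_pos h0 hδ
    have ht1 : dist x y / δ ≤ 1 := (div_le_one hδ).mpr h1
    obtain ⟨n, hn⟩ := exists_pow_lt_of_lt_one ht0 (by norm_num : (2⁻¹ : ℝ) < 1)
    have hP : ∃ k, (2⁻¹ : ℝ) ^ (k + 1) < dist x y / δ :=
      ⟨n, lt_of_le_of_lt (pow_le_pow_of_le_one (by norm_num) (by norm_num) (Nat.le_succ n)) hn⟩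
    classical
    set k := Nat.find hP with hk
    have hk1 : (2⁻¹ : ℝ) ^ (k + 1) < dist x y / δ := Nat.find_spec hP
    have hk2 : dist x y / δ ≤ (2⁻¹ : ℝ) ^ k := by
      rcases Nat.eq_zero_or_pos k with h | h
      · rw [h]; simpa using ht1
      · have := Nat.find_min hP (m := k - 1) (by omega)
        push_neg at this
        have : dist x y / δ ≤ (2⁻¹:ℝ) ^ (k - 1 + 1) := this
        rwa [Nat.sub_add_cancel h] at this
    refine ⟨k, (hmem k y).mpr ⟨?_, ?_⟩⟩
    · calc dist x y = (dist x y / δ) * δ := by field_simp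
        _ ≤ (2⁻¹:ℝ) ^ k * δ := by nlinarith
        _ = δ * 2⁻¹ ^ k := by ring
    · calc δ * 2⁻¹ ^ (k+1) = (2⁻¹:ℝ) ^ (k+1) * δ := by ring
        _ < (dist x y / δ) * δ := by nlinarith
        _ = dist x y := by field_simp
  have hzero : ∀ y : X, y ∉ (⋃ k, Ann k) → F y = 0 := by
    intro y hy
    simp only [Set.mem_iUnion, not_exists] at hy
    rcases le_or_gt (dist x y) δ with h1 | h1
    · rcases eq_or_lt_of_le (dist_nonneg : (0:ℝ) ≤ dist x y) with h0 | h0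
      · simp [hF, ← h0, Real.zero_rpow hs.ne']
      · exact absurd (hcover y h0 h1) (by simpa using hy)
    · simp [hF, not_le.mpr h1]
  -- per-annulus bound
  have hann : ∀ k : ℕ, ∫⁻ y in Ann k, F y ∂μ ≤ ENNReal.ofReal (Λ * δ * 4 ^ s * 2⁻¹ ^ k) := by
    intro k
    set R : ℝ := δ * 2⁻¹ ^ k with hR
    set r : ℝ := δ * 2⁻¹ ^ (k + 1) with hr
    have hRpos : 0 < R := hpow k
    have hrpos : 0 < r := hpow (k + 1)
    have hc : (0:ℝ) ≤ R * (r ^ s)⁻¹ := by positivity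
    have step1 : ∫⁻ y in Ann k, F y ∂μ ≤ ENNReal.ofReal (R * (r ^ s)⁻¹) * μ (Ann k) := by
      rw [← setLIntegral_const]
      apply setLIntegral_mono measurable_const
      intro y hy
      rw [hmem] at hy
      have hd1 : dist x y ≤ R := hy.1
      have hd2 : r < dist x y := hy.2
      have hRδ : R ≤ δ := by
        calc R = δ * 2⁻¹ ^ k := hR
          _ ≤ δ * 1 := mul_le_mul_of_nonneg_left (pow_le_one₀ (by norm_num) (by norm_num)) hδ.le
          _ = δ := mul_one δ
      rw [hF]
      simp only [if_pos (hd1.trans hRδ)]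
      apply ENNReal.ofReal_le_ofReal
      have hds : r ^ s ≤ dist x y ^ s := Real.rpow_le_rpow hrpos.le hd2.le hs.le
      have : (dist x y ^ s)⁻¹ ≤ (r ^ s)⁻¹ :=
        inv_anti₀ (Real.rpow_pos_of_pos hrpos s) hds
      exact mul_le_mul hd1 this (by positivity) hRpos.le
    have step2 : μ (Ann k) ≤ ENNReal.ofReal (Λ * (2 * R) ^ s) := by
      calc μ (Ann k) ≤ μ (ball x (2 * R)) := by
            apply measure_mono
            intro y hy
            rw [hmem] at hy
            rw [mem_ball, dist_comm]
            linarith [hy.1]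
        _ ≤ ENNReal.ofReal (Λ * (2 * R) ^ s) := hμ x _ (by linarith)
    calc ∫⁻ y in Ann k, F y ∂μ
        ≤ ENNReal.ofReal (R * (r ^ s)⁻¹) * ENNReal.ofReal (Λ * (2 * R) ^ s) :=
          le_trans step1 (mul_le_mul_right step2 _)
      _ = ENNReal.ofReal (R * (r ^ s)⁻¹ * (Λ * (2 * R) ^ s)) :=
          (ENNReal.ofReal_mul hc).symm
      _ = ENNReal.ofReal (Λ * δ * 4 ^ s * 2⁻¹ ^ k) := by
          congr 1
          have h2R : 2 * R = 4 * r := by rw [hR, hr]; ring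
          have h4 : (2 * R) ^ s = 4 ^ s * r ^ s := by
            rw [h2R, Real.mul_rpow (by norm_num) hrpos.le]
          rw [h4]
          have hrs : r ^ s ≠ 0 := (Real.rpow_pos_of_pos hrpos s).ne'
          calc R * (r ^ s)⁻¹ * (Λ * (4 ^ s * r ^ s))
              = Λ * R * 4 ^ s * (r ^ s * (r ^ s)⁻¹) := by ring
            _ = Λ * R * 4 ^ s := by rw [mul_inv_cancel₀ hrs, mul_one]
            _ = Λ * δ * 4 ^ s * 2⁻¹ ^ k := by rw [hR]; ring
  -- put it together
  have hsum : ∑' k, ENNReal.ofReal (Λ * δ * 4 ^ s * 2⁻¹ ^ k)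
      = ENNReal.ofReal (2 * 4 ^ s * Λ * δ) := by
    have hconst : (0:ℝ) ≤ Λ * δ * 4 ^ s := by positivity
    have : ∀ k : ℕ, ENNReal.ofReal (Λ * δ * 4 ^ s * 2⁻¹ ^ k)
        = ENNReal.ofReal (Λ * δ * 4 ^ s) * (2⁻¹ : ENNReal) ^ k := by
      intro k
      rw [ENNReal.ofReal_mul hconst, ENNReal.ofReal_pow (by norm_num)]
      congr 2
      rw [ENNReal.ofReal_inv_of_pos (by norm_num)]
      norm_num
    rw [tsum_congr this, ENNReal.tsum_mul_left, ENNReal.tsum_geometric,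
      ENNReal.one_sub_inv_two, inv_inv]
    rw [show (2:ENNReal) = ENNReal.ofReal 2 by norm_num, ← ENNReal.ofReal_mul hconst]
    congr 1
    ring
  calc ∫⁻ y, F y ∂μ = ∫⁻ y in ⋃ k, Ann k, F y ∂μ := by
        rw [← lintegral_indicator (MeasurableSet.iUnion hAnnMeas) F]
        apply lintegral_congr
        intro y
        rw [Set.indicator_apply]
        split_ifs with h
        · rfl
        · exact (hzero y h)
    _ = ∑' k, ∫⁻ y in Ann k, F y ∂μ := lintegral_iUnion hAnnMeas hdisj F
    _ ≤ ∑' k, ENNReal.ofReal (Λ * δ * 4 ^ s * 2⁻¹ ^ k) :=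
        ENNReal.tsum_le_tsum hann
    _ = ENNReal.ofReal (2 * 4 ^ s * Λ * δ) := hsum


/-- For a `Λ`-nice measure `μ`, the localized kernel `K^δ = K − K_δ`, a
compactly supported Lipschitz `f` and bounded Lipschitz `φ`,
`|∬ K^δ(x−y)H_{f,φ}(x,y) dμ dμ| ≤ C₂ δ (‖f‖_Lip‖φ‖_∞ + ‖f‖_∞‖φ‖_Lip) μ(E ∩ F_δ)`,
where `E = supp f`, `F_δ` is the closed `δ`-neighbourhood of `supp φ`, and `C₂ = C₂(d,s,Λ)`. -/
theorem stmt9 (d : ℕ) (hd : 2 ≤ d) (s α Λ : ℝ) (hs : 0 < s) (hsd : s < d)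
    (hα0 : 0 < α) (hα1 : α ≤ 1) (hΛ : 0 < Λ) :
    ∃ C₂ : ℝ, 0 < C₂ ∧
      ∀ (μ : Measure (EuclideanSpace ℝ (Fin d))),
        (∀ (x : EuclideanSpace ℝ (Fin d)) (r : ℝ), 0 < r →
          μ (ball x r) ≤ ENNReal.ofReal (Λ * r ^ s)) →
        ∀ (K : EuclideanSpace ℝ (Fin d) → ℂ),
          (∀ x, x ≠ 0 → ‖K x‖ ≤ (‖x‖ ^ s)⁻¹) →
          (∀ x, K (-x) = -K x) →
          ∀ (f φ : EuclideanSpace ℝ (Fin d) → ℝ) (Lf Lφ Mf Mφ δ : ℝ), 0 < δ →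
            HasCompactSupport f →
            (∀ x y, |f x - f y| ≤ Lf * ‖x - y‖) → (∀ x, |f x| ≤ Mf) →
            (∀ x y, |φ x - φ y| ≤ Lφ * ‖x - y‖) → (∀ x, |φ x| ≤ Mφ) →
            ‖∫ x, ∫ y,
                (if x - y = 0 then 0 else
                    K (x - y) * ((1 - (‖x - y‖ / max δ ‖x - y‖) ^ (s + α) : ℝ) : ℂ))
                  * ((((1 : ℝ) / 2) * (f y * φ x - f x * φ y) : ℝ) : ℂ) ∂μ ∂μ‖
              ≤ C₂ * δ * (Lf * Mφ + Mf * Lφ) *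
                (μ (tsupport f ∩ cthickening δ (tsupport φ))).toReal := by
  refine ⟨2 * 4 ^ s * Λ, by positivity, ?_⟩
  intro μ hμ K hK hKodd f φ Lf Lφ Mf Mφ δ hδ hf hLf hMf hLφ hMφ
  -- nonnegativity of the constants
  have hv : ‖(EuclideanSpace.single (⟨0, by omega⟩ : Fin d) (1:ℝ) : EuclideanSpace ℝ (Fin d))‖ = 1 := by
    rw [EuclideanSpace.norm_single]; simp
  have hLf0 : 0 ≤ Lf := by
    have h := hLf (EuclideanSpace.single (⟨0, by omega⟩ : Fin d) (1:ℝ)) 0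
    rw [sub_zero, hv, mul_one] at h
    exact le_trans (abs_nonneg _) h
  have hLφ0 : 0 ≤ Lφ := by
    have h := hLφ (EuclideanSpace.single (⟨0, by omega⟩ : Fin d) (1:ℝ)) 0
    rw [sub_zero, hv, mul_one] at h
    exact le_trans (abs_nonneg _) h
  have hMf0 : 0 ≤ Mf := le_trans (abs_nonneg _) (hMf 0)
  have hMφ0 : 0 ≤ Mφ := le_trans (abs_nonneg _) (hMφ 0)
  -- sigma-finiteness
  haveI : SigmaFinite μ := by
    refine ⟨⟨⟨fun n => ball 0 (n + 1), fun _ => trivial, fun n => ?_, ?_⟩⟩⟩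
    · exact lt_of_le_of_lt (hμ 0 (n + 1) (by positivity)) ENNReal.ofReal_lt_top
    · rw [Set.eq_univ_iff_forall]
      intro z
      obtain ⟨n, hn⟩ := exists_nat_gt (dist z 0)
      exact Set.mem_iUnion.mpr ⟨n, by rw [mem_ball]; linarith⟩
  set S : Set (EuclideanSpace ℝ (Fin d)) := tsupport f ∩ cthickening δ (tsupport φ) with hSdef
  have hS : MeasurableSet S :=
    ((isClosed_tsupport f).measurableSet).inter (isClosed_cthickening).measurableSet
  -- μ S is finite
  have hμS : μ S ≠ ⊤ := by
    obtain ⟨R, hR⟩ := hf.isBounded.subset_ball 0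
    have hsub : S ⊆ ball 0 (max R 1) := fun z hz =>
      ball_subset_ball (le_max_left R 1) (hR hz.1)
    exact ne_top_of_le_ne_top
      (lt_of_le_of_lt (hμ 0 (max R 1) (by positivity)) ENNReal.ofReal_lt_top).ne
      (measure_mono hsub)
  set A : ℝ := (1 / 2) * (Lf * Mφ + Mf * Lφ) with hAdef
  have hA0 : (0:ℝ) ≤ A := by
    rw [hAdef]
    have := mul_nonneg hLf0 hMφ0
    have := mul_nonneg hMf0 hLφ0
    linarith
  set w : EuclideanSpace ℝ (Fin d) → EuclideanSpace ℝ (Fin d) → ℝ := fun x y => if dist x y ≤ δ then dist x y * ((dist x y) ^ s)⁻¹ else 0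
    with hwdef
  have hw0 : ∀ x y, 0 ≤ w x y := by
    intro x y
    rw [hwdef]
    dsimp only
    split_ifs
    · positivity
    · exact le_rfl
  set W : EuclideanSpace ℝ (Fin d) → EuclideanSpace ℝ (Fin d) → ENNReal := fun x y => ENNReal.ofReal (w x y) with hWdef
  set I : EuclideanSpace ℝ (Fin d) → ENNReal := S.indicator (fun _ => (1:ENNReal)) with hIdef
  have hIne : ∀ z, I z ≠ ⊤ := by
    intro z
    by_cases h : z ∈ S <;> simp [hIdef, Set.indicator_apply, h]
  have hIm : Measurable I := measurable_const.indicator hS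
  set g : EuclideanSpace ℝ (Fin d) → EuclideanSpace ℝ (Fin d) → ℂ := fun x y =>
    (if x - y = 0 then 0 else
        K (x - y) * ((1 - (‖x - y‖ / max δ ‖x - y‖) ^ (s + α) : ℝ) : ℂ))
      * ((((1 : ℝ) / 2) * (f y * φ x - f x * φ y) : ℝ) : ℂ) with hgdef
  -- pointwise bound
  have hpt : ∀ x y, (‖g x y‖₊ : ENNReal) ≤ ENNReal.ofReal A * W x y * (I x + I y) := by
    intro x y
    by_cases hg : g x y = 0
    · simp [hg]
    have hxy : x - y ≠ 0 := by
      intro h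
      exact hg (by simp [hgdef, h])
    have hHne : f y * φ x - f x * φ y ≠ 0 := by
      intro h
      apply hg
      rw [hgdef]
      dsimp only
      rw [h, mul_zero, Complex.ofReal_zero, mul_zero]
    have hnd : (0:ℝ) < ‖x - y‖ := norm_pos_iff.mpr hxy
    have hle : ‖x - y‖ ≤ δ := by
      by_contra hgt
      push_neg at hgt
      apply hg
      have hmax : max δ ‖x - y‖ = ‖x - y‖ := max_eq_right hgt.le
      rw [hgdef]
      simp only [if_neg hxy, hmax, div_self hnd.ne', Real.one_rpow]
      norm_num
    -- indicator part
    have hor : f y * φ x ≠ 0 ∨ f x * φ y ≠ 0 := by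
      by_contra hc
      push_neg at hc
      exact hHne (by rw [hc.1, hc.2, sub_zero])
    have hdist : dist x y = ‖x - y‖ := dist_eq_norm x y
    have hind : (1:ENNReal) ≤ I x + I y := by
      rcases hor with h | h
      · have hyS : y ∈ S := by
          constructor
          · exact subset_tsupport f (by simpa using (mul_ne_zero_iff.mp h).1)
          · refine mem_cthickening_of_dist_le y x δ _
              (subset_tsupport φ (by simpa using (mul_ne_zero_iff.mp h).2)) ?_
            rw [dist_comm, hdist]; exact hle
        rw [hIdef]
        calc (1:ENNReal) = S.indicator (fun _ => (1:ENNReal)) y := by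
              rw [Set.indicator_of_mem hyS]
          _ ≤ _ := le_add_self
      · have hxS : x ∈ S := by
          constructor
          · exact subset_tsupport f (by simpa using (mul_ne_zero_iff.mp h).1)
          · refine mem_cthickening_of_dist_le x y δ _
              (subset_tsupport φ (by simpa using (mul_ne_zero_iff.mp h).2)) ?_
            rw [hdist]; exact hle
        rw [hIdef]
        calc (1:ENNReal) = S.indicator (fun _ => (1:ENNReal)) x := by
              rw [Set.indicator_of_mem hxS]
          _ ≤ _ := self_le_add_right _ _
    -- norm bound
    have hmax' : max δ ‖x - y‖ = δ := max_eq_left hle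
    have hr0 : (0:ℝ) ≤ ‖x - y‖ / δ := by positivity
    have hr1 : ‖x - y‖ / δ ≤ 1 := (div_le_one hδ).mpr hle
    have hfac : |1 - (‖x - y‖ / δ) ^ (s + α)| ≤ 1 := by
      have h1 : (‖x - y‖ / δ) ^ (s + α) ≤ 1 := Real.rpow_le_one hr0 hr1 (by linarith)
      have h2 : (0:ℝ) ≤ (‖x - y‖ / δ) ^ (s + α) := Real.rpow_nonneg hr0 _
      rw [abs_le]
      constructor <;> linarith
    have hH : |(1 / 2 : ℝ) * (f y * φ x - f x * φ y)| ≤ A * ‖x - y‖ := by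
      have e : f y * φ x - f x * φ y = (f y - f x) * φ x + f x * (φ x - φ y) := by ring
      have hstep : |f y * φ x - f x * φ y| ≤ (Lf * Mφ + Mf * Lφ) * ‖x - y‖ := by
        rw [e]
        calc |(f y - f x) * φ x + f x * (φ x - φ y)|
            ≤ |(f y - f x) * φ x| + |f x * (φ x - φ y)| := abs_add_le _ _
          _ = |f y - f x| * |φ x| + |f x| * |φ x - φ y| := by rw [abs_mul, abs_mul]
          _ ≤ (Lf * ‖y - x‖) * Mφ + Mf * (Lφ * ‖x - y‖) := by
              apply add_le_add
              · exact mul_le_mul (hLf y x) (hMφ x) (abs_nonneg _)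
                  (by positivity)
              · exact mul_le_mul (hMf x) (hLφ x y) (abs_nonneg _) hMf0
          _ = (Lf * Mφ + Mf * Lφ) * ‖x - y‖ := by rw [norm_sub_rev y x]; ring
      rw [abs_mul]
      calc |(1/2:ℝ)| * |f y * φ x - f x * φ y|
          ≤ |(1/2:ℝ)| * ((Lf * Mφ + Mf * Lφ) * ‖x - y‖) := by
            apply mul_le_mul_of_nonneg_left hstep (abs_nonneg _)
        _ = A * ‖x - y‖ := by rw [hAdef]; rw [abs_of_nonneg (by norm_num : (0:ℝ) ≤ 1/2)]; ring
    have hnorm : ‖g x y‖ ≤ A * w x y := by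
      have hwval : w x y = ‖x - y‖ * ((‖x - y‖) ^ s)⁻¹ := by
        rw [hwdef]
        dsimp only
        rw [hdist, if_pos hle]
      rw [hgdef]
      dsimp only
      rw [if_neg hxy, hmax', norm_mul, norm_mul, Complex.norm_real, Complex.norm_real]
      calc ‖K (x - y)‖ * |1 - (‖x - y‖ / δ) ^ (s + α)| * |(1/2:ℝ) * (f y * φ x - f x * φ y)|
          ≤ (‖x - y‖ ^ s)⁻¹ * 1 * (A * ‖x - y‖) := by
            apply mul_le_mul _ hH (abs_nonneg _) (by positivity)
            exact mul_le_mul (hK _ hxy) hfac (abs_nonneg _) (by positivity)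
        _ = A * w x y := by rw [hwval]; ring
    calc (‖g x y‖₊ : ENNReal) = ENNReal.ofReal ‖g x y‖ := (ofReal_norm _).symm
      _ ≤ ENNReal.ofReal (A * w x y) := ENNReal.ofReal_le_ofReal hnorm
      _ = ENNReal.ofReal A * W x y := ENNReal.ofReal_mul hA0
      _ = ENNReal.ofReal A * W x y * 1 := (mul_one _).symm
      _ ≤ ENNReal.ofReal A * W x y * (I x + I y) := mul_le_mul_right hind _
  -- measurability of W
  have hwm : Measurable (Function.uncurry W) := by
    have h1 : Measurable (fun t : ℝ => if t ≤ δ then t * (t ^ s)⁻¹ else 0) := by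
      apply Measurable.ite (measurableSet_le measurable_id measurable_const)
      · fun_prop
      · exact measurable_const
    exact (h1.comp measurable_dist).ennreal_ofReal
  have hWsnd : Measurable (Function.uncurry (fun x y => W x y * I y)) := by
    apply hwm.mul (hIm.comp measurable_snd)
  set aA : ENNReal := ENNReal.ofReal A with haA
  have haAne : aA ≠ ⊤ := ENNReal.ofReal_ne_top
  set B' : ENNReal := ENNReal.ofReal (2 * 4 ^ s * Λ * δ) with hB'
  have hkey : ∀ x, ∫⁻ y, W x y ∂μ ≤ B' :=
    fun x => stmt9_key s Λ hs hΛ μ hμ x δ hδ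
  have hkey' : ∀ y, ∫⁻ x, W x y ∂μ ≤ B' := by
    intro y
    have : ∀ x, W x y = ENNReal.ofReal
        (if dist y x ≤ δ then dist y x * ((dist y x) ^ s)⁻¹ else 0) := by
      intro x
      rw [hWdef, hwdef]
      dsimp only
      rw [dist_comm x y]
    calc ∫⁻ x, W x y ∂μ
        = ∫⁻ x, ENNReal.ofReal (if dist y x ≤ δ then dist y x * ((dist y x) ^ s)⁻¹ else 0) ∂μ :=
          lintegral_congr this
      _ ≤ B' := stmt9_key s Λ hs hΛ μ hμ y δ hδ
  -- main chain
  have step0 : (‖∫ x, ∫ y, g x y ∂μ ∂μ‖₊ : ENNReal) ≤ ∫⁻ x, ∫⁻ y, (‖g x y‖₊ : ENNReal) ∂μ ∂μ :=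
    (enorm_integral_le_lintegral_enorm _).trans
      (lintegral_mono fun x => enorm_integral_le_lintegral_enorm _)
  have inner_le : ∀ x, ∫⁻ y, aA * W x y * (I x + I y) ∂μ
      ≤ aA * I x * B' + aA * ∫⁻ y, W x y * I y ∂μ := by
    intro x
    have hm1 : Measurable (fun y => (aA * I x) * W x y) :=
      (hwm.comp (measurable_const.prodMk measurable_id)).const_mul _
    calc ∫⁻ y, aA * W x y * (I x + I y) ∂μ
        = ∫⁻ y, (aA * I x) * W x y + aA * (W x y * I y) ∂μ :=
          lintegral_congr fun y => by ring
      _ = ∫⁻ y, (aA * I x) * W x y ∂μ + ∫⁻ y, aA * (W x y * I y) ∂μ :=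
          lintegral_add_left hm1 _
      _ = (aA * I x) * ∫⁻ y, W x y ∂μ + aA * ∫⁻ y, W x y * I y ∂μ := by
          rw [lintegral_const_mul' _ _ (ENNReal.mul_ne_top haAne (hIne x)),
            lintegral_const_mul' _ _ haAne]
      _ ≤ (aA * I x) * B' + aA * ∫⁻ y, W x y * I y ∂μ := by
          exact add_le_add_left (mul_le_mul_right (hkey x) _) _
      _ = aA * I x * B' + aA * ∫⁻ y, W x y * I y ∂μ := rfl
  have hB'ne : B' ≠ ⊤ := ENNReal.ofReal_ne_top
  have hterm1 : ∫⁻ x, aA * I x * B' ∂μ = aA * B' * μ S := by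
    calc ∫⁻ x, aA * I x * B' ∂μ = ∫⁻ x, (aA * B') * I x ∂μ :=
          lintegral_congr fun x => by ring
      _ = (aA * B') * ∫⁻ x, I x ∂μ :=
          lintegral_const_mul' _ _ (ENNReal.mul_ne_top haAne hB'ne)
      _ = aA * B' * μ S := by
          rw [hIdef, lintegral_indicator_const hS, one_mul]
  have hterm2 : ∫⁻ x, aA * ∫⁻ y, W x y * I y ∂μ ∂μ ≤ aA * (B' * μ S) := by
    calc ∫⁻ x, aA * ∫⁻ y, W x y * I y ∂μ ∂μ
        = aA * ∫⁻ x, ∫⁻ y, W x y * I y ∂μ ∂μ := lintegral_const_mul' _ _ haAne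
      _ = aA * ∫⁻ y, ∫⁻ x, W x y * I y ∂μ ∂μ := by
          rw [lintegral_lintegral_swap hWsnd.aemeasurable]
      _ = aA * ∫⁻ y, I y * ∫⁻ x, W x y ∂μ ∂μ := by
          congr 1
          apply lintegral_congr
          intro y
          rw [← lintegral_const_mul' _ _ (hIne y)]
          exact lintegral_congr fun x => by ring
      _ ≤ aA * ∫⁻ y, I y * B' ∂μ := by
          apply mul_le_mul_right
          exact lintegral_mono fun y => mul_le_mul_right (hkey' y) _
      _ = aA * (B' * μ S) := by
          congr 1
          calc ∫⁻ y, I y * B' ∂μ = B' * ∫⁻ y, I y ∂μ := by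
                rw [← lintegral_const_mul' _ _ hB'ne]
                exact lintegral_congr fun y => by ring
            _ = B' * μ S := by rw [hIdef, lintegral_indicator_const hS, one_mul]
  have hmid : Measurable (fun x => aA * I x * B') := (hIm.const_mul _).mul_const _
  have final : (‖∫ x, ∫ y, g x y ∂μ ∂μ‖₊ : ENNReal) ≤ aA * B' * μ S + aA * (B' * μ S) := by
    calc (‖∫ x, ∫ y, g x y ∂μ ∂μ‖₊ : ENNReal)
        ≤ ∫⁻ x, ∫⁻ y, (‖g x y‖₊ : ENNReal) ∂μ ∂μ := step0
      _ ≤ ∫⁻ x, ∫⁻ y, aA * W x y * (I x + I y) ∂μ ∂μ :=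
          lintegral_mono fun x => lintegral_mono fun y => hpt x y
      _ ≤ ∫⁻ x, (aA * I x * B' + aA * ∫⁻ y, W x y * I y ∂μ) ∂μ :=
          lintegral_mono inner_le
      _ = ∫⁻ x, aA * I x * B' ∂μ + ∫⁻ x, aA * ∫⁻ y, W x y * I y ∂μ ∂μ :=
          lintegral_add_left hmid _
      _ ≤ aA * B' * μ S + aA * (B' * μ S) := by
          rw [hterm1]
          exact add_le_add_right hterm2 _
  -- convert to the real inequality
  set m : ℝ := (μ S).toReal with hm
  have hm0 : 0 ≤ m := ENNReal.toReal_nonneg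
  have hμSm : μ S = ENNReal.ofReal m := (ENNReal.ofReal_toReal hμS).symm
  have hBr0 : (0:ℝ) ≤ 2 * 4 ^ s * Λ * δ := by positivity
  have hRHS : aA * B' * μ S + aA * (B' * μ S)
      = ENNReal.ofReal (2 * 4 ^ s * Λ * δ * (Lf * Mφ + Mf * Lφ) * m) := by
    have h1 : aA * B' * μ S = ENNReal.ofReal (A * (2 * 4 ^ s * Λ * δ) * m) := by
      rw [hμSm, haA, hB', ← ENNReal.ofReal_mul hA0,
        ← ENNReal.ofReal_mul (mul_nonneg hA0 hBr0)]
    have h2 : aA * (B' * μ S) = ENNReal.ofReal (A * (2 * 4 ^ s * Λ * δ * m)) := by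
      rw [hμSm, haA, hB', ← ENNReal.ofReal_mul hBr0, ← ENNReal.ofReal_mul hA0]
    rw [h1, h2, ← ENNReal.ofReal_add (mul_nonneg (mul_nonneg hA0 hBr0) hm0)
      (mul_nonneg hA0 (mul_nonneg hBr0 hm0))]
    congr 1
    rw [hAdef]
    ring
  have hfinal2 : (‖∫ x, ∫ y, g x y ∂μ ∂μ‖₊ : ENNReal)
      ≤ ENNReal.ofReal (2 * 4 ^ s * Λ * δ * (Lf * Mφ + Mf * Lφ) * m) := hRHS ▸ final
  have hLM0 : (0:ℝ) ≤ Lf * Mφ + Mf * Lφ :=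
    add_nonneg (mul_nonneg hLf0 hMφ0) (mul_nonneg hMf0 hLφ0)
  calc ‖∫ x, ∫ y, g x y ∂μ ∂μ‖
      = ((‖∫ x, ∫ y, g x y ∂μ ∂μ‖₊ : ENNReal)).toReal := by simp
    _ ≤ (ENNReal.ofReal (2 * 4 ^ s * Λ * δ * (Lf * Mφ + Mf * Lφ) * m)).toReal :=
        ENNReal.toReal_mono ENNReal.ofReal_ne_top hfinal2
    _ = 2 * 4 ^ s * Λ * δ * (Lf * Mφ + Mf * Lφ) * m :=
        ENNReal.toReal_ofReal (by
          apply mul_nonneg _ hm0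
          exact mul_nonneg hBr0 hLM0)
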